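/- Let S₁, S₂ be finite sets. Then μ₁ ⊑_R μ₂ holds if and only if there exists a weight function w : S₁ × S₂ → [0,1] such that (i) for all s ∈ S₁, ∑_{t ∈ S₂} w(s,t) = μ₁(s), (ii) for all t ∈ S₂, ∑_{s ∈ S₁} w(s,t) = μ₂(t), and (iii) w(s,t) > 0 implies (s,t) ∈ R. -/

import Mathlib

noncomputable def setSum {S : Type*} (μ : S → ℝ) (A : Set S) : ℝ := ∑ᶠ s ∈ A, μ s

def relImg {S T : Type*} (R : Set (S × T)) (A : Set S) : Set T :=
  {t | ∃ s ∈ A, (s, t) ∈ R}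

def distLe {S T : Type*} (R : Set (S × T)) (μ : S → ℝ) (ν : T → ℝ) : Prop :=
  ∀ A : Set S, setSum μ A ≤ setSum ν (relImg R A)

open MeasureTheory intervalIntegral Finset

lemma step_intble (a m u v : ℝ) :
    IntervalIntegrable (fun c => if a ≤ c then m else 0) volume u v := by
  have he : (fun c => if a ≤ c then m else 0) = (Set.Ici a).indicator (fun _ => m) := by
    funext c; simp [Set.indicator_apply, Set.mem_Ici]
  rw [he, intervalIntegrable_iff]
  unfold IntegrableOn
  rw [integrable_indicator_iff measurableSet_Ici]
  apply (integrableOn_const_iff (C := m)).mpr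
  right
  calc (volume.restrict (Set.uIoc u v)) (Set.Ici a) ≤ volume (Set.uIoc u v) := by
        rw [Measure.restrict_apply measurableSet_Ici]
        exact measure_mono Set.inter_subset_right
    _ < ⊤ := measure_Ioc_lt_top

lemma step_integral (a m c₀ c₁ : ℝ) (h0 : c₀ ≤ a) (h1 : a ≤ c₁) :
    ∫ c in c₀..c₁, (if a ≤ c then m else 0) = m * (c₁ - a) := by
  have key : (∫ c in c₀..a, (if a ≤ c then m else 0)) + (∫ c in a..c₁, (if a ≤ c then m else 0))
      = ∫ c in c₀..c₁, (if a ≤ c then m else 0) :=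
    integral_add_adjacent_intervals (step_intble a m c₀ a) (step_intble a m a c₁)
  have h2 : ∫ c in a..c₁, (if a ≤ c then m else 0) = m * (c₁ - a) := by
    rw [integral_congr (g := fun _ => m) ?_, intervalIntegral.integral_const, smul_eq_mul, mul_comm]
    intro c hc
    rw [Set.uIcc_of_le h1] at hc
    simp [hc.1]
  have h3 : ∫ c in c₀..a, (if a ≤ c then m else 0) = 0 := by
    have hae : ∀ᵐ x ∂(volume : Measure ℝ), x ≠ a := by
      rw [MeasureTheory.ae_iff]
      simpa using Real.volume_singleton
    rw [intervalIntegral.integral_congr_ae (g := fun _ => (0:ℝ)) ?_, intervalIntegral.integral_const, smul_zero]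
    filter_upwards [hae] with x hx hmem
    rw [Set.uIoc_of_le h0] at hmem
    have : ¬ a ≤ x := fun h => hx (le_antisymm hmem.2 h)
    simp [this]
  linarith [key, h2, h3]

lemma sum_mul_eq_sub_integral {S : Type*} [Fintype S] (μ f : S → ℝ) (c₀ c₁ : ℝ)
    (hf : ∀ s, c₀ ≤ f s ∧ f s ≤ c₁) :
    ∑ s, μ s * f s
      = (∑ s, μ s) * c₁ - ∫ c in c₀..c₁, (∑ s, if f s ≤ c then μ s else 0) := by
  have hswap : ∫ c in c₀..c₁, (∑ s, if f s ≤ c then μ s else 0)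
      = ∑ s, ∫ c in c₀..c₁, (if f s ≤ c then μ s else 0) :=
    intervalIntegral.integral_finset_sum (fun s _ => step_intble (f s) (μ s) c₀ c₁)
  rw [hswap]
  have : ∀ s : S, ∫ c in c₀..c₁, (if f s ≤ c then μ s else 0) = μ s * (c₁ - f s) :=
    fun s => step_integral (f s) (μ s) c₀ c₁ (hf s).1 (hf s).2
  simp only [this, mul_sub]
  rw [Finset.sum_sub_distrib, Finset.sum_mul]
  ring


lemma sum_intble {S : Type*} [Fintype S] (μ g : S → ℝ) (c₀ c₁ : ℝ) :
    IntervalIntegrable (fun c => ∑ s, if g s ≤ c then μ s else 0) volume c₀ c₁ := by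
  have h := IntervalIntegrable.sum (μ := volume) (a := c₀) (b := c₁)
    (f := fun s c => if g s ≤ c then μ s else 0) univ
    (fun s _ => step_intble (g s) (μ s) c₀ c₁)
  have heq : (∑ i ∈ univ, (fun (s : S) (c : ℝ) => if g s ≤ c then μ s else 0) i)
      = (fun c => ∑ s, if g s ≤ c then μ s else 0) := by
    funext c
    simp [Finset.sum_apply]
  rwa [heq] at h

lemma expectation_mono {S T : Type*} [Fintype S] [Fintype T]
    (μ : S → ℝ) (ν : T → ℝ) (g : S → ℝ) (h : T → ℝ)
    (hμ1 : ∑ s, μ s = 1) (hν1 : ∑ t, ν t = 1)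
    (dom : ∀ c : ℝ, (∑ s, if g s ≤ c then μ s else 0) ≤ (∑ t, if h t ≤ c then ν t else 0)) :
    ∑ t, ν t * h t ≤ ∑ s, μ s * g s := by
  have hS : Nonempty S := by
    by_contra hc
    rw [not_nonempty_iff] at hc
    rw [Finset.univ_eq_empty, Finset.sum_empty] at hμ1
    norm_num at hμ1
  have hT : Nonempty T := by
    by_contra hc
    rw [not_nonempty_iff] at hc
    rw [Finset.univ_eq_empty, Finset.sum_empty] at hν1
    norm_num at hν1
  set c₀ : ℝ := min (Finset.univ.inf' univ_nonempty g) (Finset.univ.inf' univ_nonempty h) with hc₀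
  set c₁ : ℝ := max (Finset.univ.sup' univ_nonempty g) (Finset.univ.sup' univ_nonempty h) with hc₁
  have hg : ∀ s, c₀ ≤ g s ∧ g s ≤ c₁ := fun s =>
    ⟨le_trans (min_le_left _ _) (Finset.inf'_le _ (mem_univ s)),
     le_trans (Finset.le_sup' _ (mem_univ s)) (le_max_left _ _)⟩
  have hh : ∀ t, c₀ ≤ h t ∧ h t ≤ c₁ := fun t =>
    ⟨le_trans (min_le_right _ _) (Finset.inf'_le _ (mem_univ t)),
     le_trans (Finset.le_sup' _ (mem_univ t)) (le_max_right _ _)⟩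
  have hc01 : c₀ ≤ c₁ := le_trans (hg (Classical.arbitrary S)).1 (hg (Classical.arbitrary S)).2
  rw [sum_mul_eq_sub_integral μ g c₀ c₁ hg, sum_mul_eq_sub_integral ν h c₀ c₁ hh, hμ1, hν1]
  have i1 : IntervalIntegrable (fun c => ∑ s, if g s ≤ c then μ s else 0) volume c₀ c₁ :=
    sum_intble μ g c₀ c₁
  have i2 : IntervalIntegrable (fun c => ∑ t, if h t ≤ c then ν t else 0) volume c₀ c₁ :=
    sum_intble ν h c₀ c₁
  have : (∫ c in c₀..c₁, (∑ s, if g s ≤ c then μ s else 0))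
      ≤ ∫ c in c₀..c₁, (∑ t, if h t ≤ c then ν t else 0) :=
    intervalIntegral.integral_mono_on hc01 i1 i2 (fun c _ => dom c)
  linarith

lemma setSum_eq_sum {S : Type*} [Fintype S] (μ : S → ℝ) (A : Set S) [DecidablePred (· ∈ A)] :
    setSum μ A = ∑ s, if s ∈ A then μ s else 0 := by
  rw [setSum, finsum_mem_def, finsum_eq_sum_of_fintype]
  exact Finset.sum_congr rfl fun s _ => by simp [Set.indicator_apply]

lemma dual_nonneg {S₁ S₂ : Type*} [Fintype S₁] [Fintype S₂]
    (R : Set (S₁ × S₂)) (μ₁ : S₁ → ℝ) (μ₂ : S₂ → ℝ)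
    (h₁0 : ∀ s, 0 ≤ μ₁ s) (h₁ : ∑ s, μ₁ s = 1)
    (h₂0 : ∀ t, 0 ≤ μ₂ t) (h₂ : ∑ t, μ₂ t = 1)
    (hle : distLe R μ₁ μ₂) (y : S₁ → ℝ) (z : S₂ → ℝ)
    (hyz : ∀ p ∈ R, 0 ≤ y p.1 + z p.2) :
    0 ≤ ∑ s, y s * μ₁ s + ∑ t, z t * μ₂ t := by
  classical
  set h : S₂ → ℝ := fun t => -z t with hh
  set g : S₁ → ℝ := fun s =>
    if hs : (univ.filter (fun t => (s, t) ∈ R)).Nonempty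
    then (univ.filter (fun t => (s, t) ∈ R)).sup' hs h else y s with hg
  have hgy : ∀ s, g s ≤ y s := by
    intro s
    rw [hg]
    by_cases hs : (univ.filter (fun t => (s, t) ∈ R)).Nonempty
    · simp only [hs, dif_pos]
      apply Finset.sup'_le
      intro t ht
      rw [Finset.mem_filter] at ht
      have := hyz (s, t) ht.2
      simp only [hh]
      linarith
    · simp [hs]
  have dom : ∀ c : ℝ, (∑ s, if g s ≤ c then μ₁ s else 0) ≤ (∑ t, if h t ≤ c then μ₂ t else 0) := by
    intro c
    have hA := hle {s | g s ≤ c}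
    rw [setSum_eq_sum, setSum_eq_sum] at hA
    refine le_trans (le_of_eq ?_) (le_trans hA ?_)
    · exact Finset.sum_congr rfl fun s _ => by simp [Set.mem_setOf_eq]
    · apply Finset.sum_le_sum
      intro t _
      by_cases ht : t ∈ relImg R {s | g s ≤ c}
      · have htc : h t ≤ c := by
          obtain ⟨s, hsA, hsR⟩ := ht
          have hmem : t ∈ univ.filter (fun t' => (s, t') ∈ R) := by
            rw [Finset.mem_filter]; exact ⟨mem_univ t, hsR⟩
          have hne : (univ.filter (fun t' => (s, t') ∈ R)).Nonempty := ⟨t, hmem⟩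
          have hht : h t ≤ g s := by
            rw [hg]; simp only [hne, dif_pos]
            exact Finset.le_sup' h hmem
          exact le_trans hht hsA
        rw [if_pos ht, if_pos htc]
      · simp only [ht, if_neg, if_false]
        by_cases h2 : h t ≤ c
        · simp [h2, h₂0 t]
        · simp [h2]
  have key := expectation_mono μ₁ μ₂ g h h₁ h₂ dom
  have key2 : ∑ s, μ₁ s * g s ≤ ∑ s, μ₁ s * y s :=
    Finset.sum_le_sum fun s _ => mul_le_mul_of_nonneg_left (hgy s) (h₁0 s)
  have e1 : ∑ s, y s * μ₁ s = ∑ s, μ₁ s * y s := Finset.sum_congr rfl fun s _ => mul_comm _ _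
  have e2 : ∑ t, z t * μ₂ t = -∑ t, μ₂ t * h t := by
    rw [← Finset.sum_neg_distrib]
    exact Finset.sum_congr rfl fun t _ => by simp [hh]; ring
  rw [e1, e2]
  linarith

section Farkas

variable (S₁ S₂ : Type*) [Fintype S₁] [Fintype S₂]

/-- The marginal (row/column sums) linear map. -/
noncomputable def margL :
    EuclideanSpace ℝ (S₁ × S₂) →ₗ[ℝ] EuclideanSpace ℝ (S₁ ⊕ S₂) where
  toFun w := WithLp.toLp 2 (fun x => Sum.elim (fun s => ∑ t, w (s, t)) (fun t => ∑ s, w (s, t)) x)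
  map_add' a b := by
    ext x
    cases x <;> simp [Finset.sum_add_distrib]
  map_smul' c a := by
    ext x
    cases x <;> simp [Finset.mul_sum]

lemma margL_apply_inl (w : EuclideanSpace ℝ (S₁ × S₂)) (s : S₁) :
    margL S₁ S₂ w (Sum.inl s) = ∑ t, w (s, t) := rfl

lemma margL_apply_inr (w : EuclideanSpace ℝ (S₁ × S₂)) (t : S₂) :
    margL S₁ S₂ w (Sum.inr t) = ∑ s, w (s, t) := rfl

variable {S₁ S₂}

/-- The cone of nonnegative vectors supported on `R`. -/
noncomputable def coneK (R : Set (S₁ × S₂)) : ProperCone ℝ (EuclideanSpace ℝ (S₁ × S₂)) where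
  carrier := {w : EuclideanSpace ℝ (S₁ × S₂) | ∀ p, 0 ≤ w p ∧ (p ∉ R → w p = 0)}
  add_mem' := by
    intro a b ha hb p
    have h1 := ha p; have h2 := hb p
    have he : (a + b) p = a p + b p := rfl
    constructor
    · rw [he]; linarith [h1.1, h2.1]
    · intro hp; rw [he, h1.2 hp, h2.2 hp, add_zero]
  zero_mem' := by
    intro p
    exact ⟨le_refl 0, fun _ => rfl⟩
  smul_mem' := by
    rintro ⟨c, hc⟩ a ha p
    have he : ((⟨c, hc⟩ : {c : ℝ // 0 ≤ c}) • a) p = c * a p := rfl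
    constructor
    · rw [he]; exact mul_nonneg hc (ha p).1
    · intro hp; rw [he, (ha p).2 hp, mul_zero]
  isClosed' := by
    show IsClosed {w : EuclideanSpace ℝ (S₁ × S₂) | ∀ p, 0 ≤ w p ∧ (p ∉ R → w p = 0)}
    have : {w : EuclideanSpace ℝ (S₁ × S₂) | ∀ p, 0 ≤ w p ∧ (p ∉ R → w p = 0)}
        = ⋂ p, ({w : EuclideanSpace ℝ (S₁ × S₂) | 0 ≤ w p}
            ∩ {w : EuclideanSpace ℝ (S₁ × S₂) | p ∉ R → w p = 0}) := by
      ext w; simp only [Set.mem_iInter, Set.mem_inter_iff, Set.mem_setOf_eq]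
    rw [this]
    refine isClosed_iInter fun p => IsClosed.inter ?_ ?_
    · exact isClosed_le continuous_const (EuclideanSpace.proj p).continuous
    · by_cases hp : p ∈ R
      · have huniv : {w : EuclideanSpace ℝ (S₁ × S₂) | p ∉ R → w p = 0} = Set.univ := by
          ext w; simp [hp]
        rw [huniv]; exact isClosed_univ
      · simp only [hp, not_false_eq_true, true_implies]
        exact isClosed_eq (EuclideanSpace.proj p).continuous continuous_const

lemma mem_coneK {R : Set (S₁ × S₂)} {w : EuclideanSpace ℝ (S₁ × S₂)} :
    w ∈ coneK R ↔ ∀ p, 0 ≤ w p ∧ (p ∉ R → w p = 0) := Iff.rfl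

end Farkas


lemma euclid_abs_le_norm {ι : Type*} [Fintype ι] (x : EuclideanSpace ℝ ι) (i : ι) :
    |x i| ≤ ‖x‖ := by
  rw [EuclideanSpace.norm_eq, ← Real.sqrt_sq_eq_abs]
  apply Real.sqrt_le_sqrt
  have : |x i| ^ 2 ≤ ∑ j, ‖x j‖ ^ 2 :=
    Finset.single_le_sum (f := fun j => ‖x j‖ ^ 2)
      (fun j _ => by positivity) (Finset.mem_univ i)
  simpa [Real.norm_eq_abs, sq_abs] using this

lemma euclid_norm_le {ι : Type*} [Fintype ι] (x : EuclideanSpace ℝ ι) (C : ℝ) (hC : 0 ≤ C)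
    (h : ∀ i, |x i| ≤ C) : ‖x‖ ≤ Real.sqrt (Fintype.card ι) * C := by
  rw [EuclideanSpace.norm_eq]
  have hb : ∑ i, ‖x i‖ ^ 2 ≤ (Fintype.card ι : ℝ) * C ^ 2 := by
    calc ∑ i, ‖x i‖ ^ 2 ≤ ∑ _i : ι, C ^ 2 := by
          apply Finset.sum_le_sum
          intro i _
          have := h i
          rw [Real.norm_eq_abs]
          nlinarith [abs_nonneg (x i)]
      _ = (Fintype.card ι : ℝ) * C ^ 2 := by
          rw [Finset.sum_const, Finset.card_univ, nsmul_eq_mul]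
  calc Real.sqrt (∑ i, ‖x i‖ ^ 2) ≤ Real.sqrt ((Fintype.card ι : ℝ) * C ^ 2) :=
        Real.sqrt_le_sqrt hb
    _ = Real.sqrt (Fintype.card ι) * C := by
        rw [Real.sqrt_mul (by positivity), Real.sqrt_sq hC]

open scoped InnerProductSpace in
lemma distLe_to_weight {S₁ S₂ : Type*} [Fintype S₁] [Fintype S₂]
    (R : Set (S₁ × S₂)) (μ₁ : S₁ → ℝ) (μ₂ : S₂ → ℝ)
    (h₁0 : ∀ s, 0 ≤ μ₁ s) (h₁ : ∑ s, μ₁ s = 1)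
    (h₂0 : ∀ t, 0 ≤ μ₂ t) (h₂ : ∑ t, μ₂ t = 1)
    (hle : distLe R μ₁ μ₂) :
    ∃ w : S₁ × S₂ → ℝ, (∀ p, 0 ≤ w p) ∧
      (∀ s : S₁, ∑ t : S₂, w (s, t) = μ₁ s) ∧
      (∀ t : S₂, ∑ s : S₁, w (s, t) = μ₂ t) ∧
      (∀ p, p ∉ R → w p = 0) := by
  classical
  set f : EuclideanSpace ℝ (S₁ × S₂) →L[ℝ] EuclideanSpace ℝ (S₁ ⊕ S₂) :=
    LinearMap.toContinuousLinearMap (margL S₁ S₂) with hfdef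
  have hfapp : ∀ w, f w = margL S₁ S₂ w := fun w => rfl
  set b : EuclideanSpace ℝ (S₁ ⊕ S₂) := WithLp.toLp 2 (fun x => Sum.elim μ₁ μ₂ x) with hbdef
  -- the dual condition
  have hdual : ∀ y : EuclideanSpace ℝ (S₁ ⊕ S₂),
      ContinuousLinearMap.adjoint f y ∈ ProperCone.innerDual (coneK R : Set (EuclideanSpace ℝ (S₁ × S₂))) → 0 ≤ ⟪y, b⟫_ℝ := by
    intro y hy
    rw [ProperCone.mem_innerDual] at hy
    have hyR : ∀ p ∈ R, 0 ≤ (fun s => y (Sum.inl s)) p.1 + (fun t => y (Sum.inr t)) p.2 := by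
      intro p hp
      have hx : (EuclideanSpace.single p (1:ℝ)) ∈ coneK R := by
        rw [mem_coneK]
        intro q
        rw [EuclideanSpace.single_apply]
        constructor
        · positivity
        · intro hq
          by_cases hqp : q = p
          · exact absurd (hqp ▸ hp) hq
          · simp [hqp]
      have h0 := hy hx
      rw [ContinuousLinearMap.adjoint_inner_right] at h0
      have hinner : ⟪f (EuclideanSpace.single p (1:ℝ)), y⟫_ℝ
          = y (Sum.inl p.1) + y (Sum.inr p.2) := by
        rw [PiLp.inner_apply]
        simp only [RCLike.inner_apply, conj_trivial]
        rw [Fintype.sum_sum_type]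
        have e1 : ∀ s, f (EuclideanSpace.single p (1:ℝ)) (Sum.inl s)
            = if s = p.1 then 1 else 0 := by
          intro s
          rw [hfapp, margL_apply_inl]
          by_cases hs : s = p.1
          · subst hs
            rw [if_pos rfl]
            rw [Finset.sum_eq_single p.2]
            · simp [EuclideanSpace.single_apply]
            · intro t _ ht
              rw [EuclideanSpace.single_apply, if_neg]
              intro hc
              exact ht (congrArg Prod.snd hc)
            · intro h; exact absurd (mem_univ _) h
          · rw [if_neg hs]
            apply Finset.sum_eq_zero
            intro t _
            rw [EuclideanSpace.single_apply, if_neg]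
            intro hc
            exact hs (congrArg Prod.fst hc)
        have e2 : ∀ t, f (EuclideanSpace.single p (1:ℝ)) (Sum.inr t)
            = if t = p.2 then 1 else 0 := by
          intro t
          rw [hfapp, margL_apply_inr]
          by_cases ht : t = p.2
          · subst ht
            rw [if_pos rfl]
            rw [Finset.sum_eq_single p.1]
            · simp [EuclideanSpace.single_apply]
            · intro s _ hs
              rw [EuclideanSpace.single_apply, if_neg]
              intro hc
              exact hs (congrArg Prod.fst hc)
            · intro h; exact absurd (mem_univ _) h
          · rw [if_neg ht]
            apply Finset.sum_eq_zero
            intro s _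
            rw [EuclideanSpace.single_apply, if_neg]
            intro hc
            exact ht (congrArg Prod.snd hc)
        simp only [e1, e2, ite_mul, one_mul, zero_mul, mul_ite, mul_one, mul_zero]
        rw [Finset.sum_ite_eq' univ p.1 (fun s => y (Sum.inl s)),
          Finset.sum_ite_eq' univ p.2 (fun t => y (Sum.inr t))]
        simp
      rw [hinner] at h0
      exact h0
    have h0' := dual_nonneg R μ₁ μ₂ h₁0 h₁ h₂0 h₂ hle (fun s => y (Sum.inl s)) (fun t => y (Sum.inr t)) hyR
    have hby : ⟪y, b⟫_ℝ = ∑ s, y (Sum.inl s) * μ₁ s + ∑ t, y (Sum.inr t) * μ₂ t := by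
      rw [PiLp.inner_apply]
      simp only [RCLike.inner_apply, conj_trivial]
      rw [Fintype.sum_sum_type]
      exact congrArg₂ (· + ·) (Finset.sum_congr rfl fun s _ => mul_comm _ _)
        (Finset.sum_congr rfl fun t _ => mul_comm _ _)
    rw [hby]
    exact h0'
  -- apply Farkas
  have hmem : b ∈ (coneK R).map f := ProperCone.relative_hyperplane_separation.mpr
    (fun y hy => by rw [real_inner_comm]; exact hdual y hy)
  rw [ProperCone.mem_map, PointedCone.mem_closure] at hmem
  obtain ⟨u, humem, hulim⟩ := mem_closure_iff_seq_limit.mp hmem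
  have hex : ∀ n, ∃ v, v ∈ coneK R ∧ margL S₁ S₂ v = u n := by
    intro n
    have hn := humem n
    rw [SetLike.mem_coe, PointedCone.mem_map] at hn
    obtain ⟨x, hx1, hx2⟩ := hn
    exact ⟨x, hx1, hx2⟩
  choose wseq hwK hwf using hex
  obtain ⟨C, hC⟩ := (Metric.isBounded_range_of_tendsto u hulim).exists_norm_le
  have hC' : ∀ n, ‖u n‖ ≤ C := fun n => hC _ (Set.mem_range_self n)
  have hC0 : 0 ≤ C := le_trans (norm_nonneg _) (hC' 0)
  -- coordinate bounds on wseq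
  have hcoord : ∀ n p, |wseq n p| ≤ C := by
    intro n p
    have h1 : 0 ≤ wseq n p := ((mem_coneK.mp (hwK n)) p).1
    rw [abs_of_nonneg h1]
    have h2 : wseq n p ≤ ∑ t, wseq n (p.1, t) := by
      have : wseq n (p.1, p.2) ≤ ∑ t, wseq n (p.1, t) :=
        Finset.single_le_sum (f := fun t => wseq n (p.1, t))
          (fun t _ => ((mem_coneK.mp (hwK n)) (p.1, t)).1) (mem_univ p.2)
      simpa using this
    have h3 : ∑ t, wseq n (p.1, t) = u n (Sum.inl p.1) := by
      rw [← hwf n, margL_apply_inl]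
    have h4 : |u n (Sum.inl p.1)| ≤ C := le_trans (euclid_abs_le_norm _ _) (hC' n)
    calc wseq n p ≤ u n (Sum.inl p.1) := by rw [← h3]; exact h2
      _ ≤ |u n (Sum.inl p.1)| := le_abs_self _
      _ ≤ C := h4
  have hnorm : ∀ n, wseq n ∈ Metric.closedBall (0 : EuclideanSpace ℝ (S₁ × S₂))
      (Real.sqrt (Fintype.card (S₁ × S₂)) * C) := by
    intro n
    rw [Metric.mem_closedBall, dist_zero_right]
    exact euclid_norm_le _ C hC0 (hcoord n)
  obtain ⟨wlim, hwlim_mem, φ, hφ, hconv⟩ :=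
    (isCompact_closedBall (0 : EuclideanSpace ℝ (S₁ × S₂)) _).tendsto_subseq hnorm
  have hwlimK : wlim ∈ coneK R := by
    apply (coneK R).isClosed.mem_of_tendsto hconv
    exact Filter.Eventually.of_forall (fun n => hwK (φ n))
  have hflim : margL S₁ S₂ wlim = b := by
    have hc1 : Filter.Tendsto (fun n => f (wseq (φ n))) Filter.atTop (nhds (f wlim)) :=
      (f.continuous.tendsto _).comp hconv
    have hc2 : Filter.Tendsto (fun n => f (wseq (φ n))) Filter.atTop (nhds b) := by
      have he : (fun n => f (wseq (φ n))) = u ∘ φ := by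
        funext n; rw [hfapp, hwf]; rfl
      rw [he]
      exact hulim.comp (StrictMono.tendsto_atTop hφ)
    have := tendsto_nhds_unique hc1 hc2
    rw [← this, hfapp]
  refine ⟨fun p => wlim p, ?_, ?_, ?_, ?_⟩
  · exact fun p => ((mem_coneK.mp hwlimK) p).1
  · intro s
    have := congrFun (congrArg WithLp.ofLp hflim) (Sum.inl s)
    rw [margL_apply_inl] at this
    exact this
  · intro t
    have := congrFun (congrArg WithLp.ofLp hflim) (Sum.inr t)
    rw [margL_apply_inr] at this
    exact this
  · exact fun p hp => ((mem_coneK.mp hwlimK) p).2 hp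


lemma weight_to_distLe {S₁ S₂ : Type*} [Fintype S₁] [Fintype S₂]
    (R : Set (S₁ × S₂)) (μ₁ : S₁ → ℝ) (μ₂ : S₂ → ℝ) (w : S₁ × S₂ → ℝ)
    (hw0 : ∀ p, 0 ≤ w p)
    (hw1 : ∀ s : S₁, ∑ t : S₂, w (s, t) = μ₁ s)
    (hw2 : ∀ t : S₂, ∑ s : S₁, w (s, t) = μ₂ t)
    (hwR : ∀ p, 0 < w p → p ∈ R) : distLe R μ₁ μ₂ := by
  classical
  intro A
  rw [setSum_eq_sum, setSum_eq_sum]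
  calc ∑ s, (if s ∈ A then μ₁ s else 0)
      = ∑ s, ∑ t, (if s ∈ A then w (s, t) else 0) := by
        apply Finset.sum_congr rfl
        intro s _
        by_cases hs : s ∈ A
        · simp [hs, hw1 s]
        · simp [hs]
    _ = ∑ t, ∑ s, (if s ∈ A then w (s, t) else 0) := Finset.sum_comm
    _ ≤ ∑ t, (if t ∈ relImg R A then μ₂ t else 0) := by
        apply Finset.sum_le_sum
        intro t _
        by_cases ht : t ∈ relImg R A
        · rw [if_pos ht, ← hw2 t]
          apply Finset.sum_le_sum
          intro s _
          by_cases hs : s ∈ A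
          · rw [if_pos hs]
          · rw [if_neg hs]; exact hw0 _
        · rw [if_neg ht]
          apply le_of_eq
          apply Finset.sum_eq_zero
          intro s _
          by_cases hs : s ∈ A
          · rw [if_pos hs]
            by_contra hc
            have hpos : 0 < w (s, t) := lt_of_le_of_ne (hw0 _) (Ne.symm hc)
            exact ht ⟨s, hs, hwR _ hpos⟩
          · rw [if_neg hs]

/-- Equivalence between the subset characterization of distribution simulation
and the weight-function definition. -/
theorem distLe_iff_weight_function {S₁ S₂ : Type*} [Fintype S₁] [Fintype S₂]
    (R : Set (S₁ × S₂)) (μ₁ : S₁ → ℝ) (μ₂ : S₂ → ℝ)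
    (h₁0 : ∀ s, 0 ≤ μ₁ s) (h₁1 : ∀ s, μ₁ s ≤ 1) (h₁ : ∑ s, μ₁ s = 1)
    (h₂0 : ∀ t, 0 ≤ μ₂ t) (h₂1 : ∀ t, μ₂ t ≤ 1) (h₂ : ∑ t, μ₂ t = 1) :
    distLe R μ₁ μ₂ ↔
      ∃ w : S₁ × S₂ → ℝ,
        (∀ p, 0 ≤ w p ∧ w p ≤ 1) ∧
        (∀ s : S₁, ∑ t : S₂, w (s, t) = μ₁ s) ∧
        (∀ t : S₂, ∑ s : S₁, w (s, t) = μ₂ t) ∧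
        (∀ p, 0 < w p → p ∈ R) := by
  constructor
  · intro hle
    obtain ⟨w, hw0, hw1, hw2, hwR⟩ := distLe_to_weight R μ₁ μ₂ h₁0 h₁ h₂0 h₂ hle
    refine ⟨w, fun p => ⟨hw0 p, ?_⟩, hw1, hw2, fun p hp => ?_⟩
    · have hb : w p ≤ ∑ t, w (p.1, t) := by
        have := Finset.single_le_sum (f := fun t => w (p.1, t))
          (fun t _ => hw0 (p.1, t)) (Finset.mem_univ p.2)
        simpa using this
      calc w p ≤ ∑ t, w (p.1, t) := hb
        _ = μ₁ p.1 := hw1 p.1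
        _ ≤ 1 := h₁1 p.1
    · by_contra hc
      rw [hwR p hc] at hp
      exact lt_irrefl 0 hp
  · rintro ⟨w, hw01, hw1, hw2, hwR⟩
    exact weight_to_distLe R μ₁ μ₂ w (fun p => (hw01 p).1) hw1 hw2 hwR
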